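/- Let p, q be coprime positive integers with p ≥ 2 and set N(r₁,r₂) = min(2q−2−r₁−r₂, r₁+r₂). The rational-level fusion product (V_{r₁}^α, V_{s₁})~ ∘ (V_{r₂}^β, V_{s₂})~ = Σ_{j=|r₁−r₂|}^{N(r₁,r₂)} (V_j^{α+β+r₁+r₂−j}, V_{s₁} ⊗̇_{p−2} V_{s₂})~ is well defined on equivalence classes: it is independent of the choice of representatives under (V_m^ε, V_n) ≈ (V_{q−1−m}^{ε+1}, V_{p−2−n}). -/
import Mathlib


/-- The Kac–Wakimoto identification `(m, ε, n) ↦ (q-1-m, ε+1, p-2-n)` on symbols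
`(V_m^ε, V_n)`, `0 ≤ m ≤ q-1`, `0 ≤ n ≤ p-2`, written with `Fin.rev`. -/
def kwInvol (p q : ℕ) (x : Fin q × ZMod 2 × Fin (p - 1)) :
    Fin q × ZMod 2 × Fin (p - 1) :=
  (x.1.rev, x.2.1 + 1, x.2.2.rev)

/-- The relation whose quotient is the set of equivalence classes
`(V_m^ε, V_n)~`. -/
def kwRel (p q : ℕ) (x y : Fin q × ZMod 2 × Fin (p - 1)) : Prop :=
  y = kwInvol p q x

/-- The rational-level fusion product of two representative symbols, as an
element of the free ℤ-module on the set of equivalence classes: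
`(V_{r₁}^α, V_{s₁}) ∘ (V_{r₂}^β, V_{s₂}) =
  Σ_{j=|r₁-r₂|}^{min(2q-2-r₁-r₂, r₁+r₂)}
    (V_j^{α+β+r₁+r₂-j}, V_{s₁} ⊗̇_{p-2} V_{s₂})~`,
where `V_{s₁} ⊗̇_{p-2} V_{s₂} = ⊕_{l=|s₁-s₂|, step 2}^{min(2(p-2)-s₁-s₂, s₁+s₂)} V_l`. -/
noncomputable def kwFus (p q : ℕ) (a b : Fin q × ZMod 2 × Fin (p - 1)) :
    Quot (kwRel p q) →₀ ℤ :=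
  ∑ j : Fin q, ∑ l : Fin (p - 1),
    if ((a.1 : ℕ) - (b.1 : ℕ)) ⊔ ((b.1 : ℕ) - (a.1 : ℕ)) ≤ (j : ℕ) ∧
        (j : ℕ) ≤ min (2 * q - 2 - (a.1 : ℕ) - (b.1 : ℕ)) ((a.1 : ℕ) + (b.1 : ℕ)) ∧
        ((a.2.2 : ℕ) - (b.2.2 : ℕ)) ⊔ ((b.2.2 : ℕ) - (a.2.2 : ℕ)) ≤ (l : ℕ) ∧
        (l : ℕ) ≤ min (2 * (p - 2) - (a.2.2 : ℕ) - (b.2.2 : ℕ)) ((a.2.2 : ℕ) + (b.2.2 : ℕ)) ∧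
        ((a.2.2 : ℕ) + (b.2.2 : ℕ) + (l : ℕ)) % 2 = 0
    then Finsupp.single
      (Quot.mk (kwRel p q)
        (j, a.2.1 + b.2.1 + (((a.1 : ℕ) + (b.1 : ℕ) - (j : ℕ) : ℕ) : ZMod 2), l)) 1
    else 0

lemma kw_quot_eq (p q : ℕ) (x : Fin q × ZMod 2 × Fin (p - 1)) :
    Quot.mk (kwRel p q) x = Quot.mk (kwRel p q) (kwInvol p q x) :=
  Quot.sound rfl

lemma kw_reidx (p q : ℕ) (F : Fin q → Fin (p - 1) → (Quot (kwRel p q) →₀ ℤ)) :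
    (∑ j : Fin q, ∑ l : Fin (p - 1), F j.rev l.rev)
      = ∑ j : Fin q, ∑ l : Fin (p - 1), F j l := by
  calc (∑ j : Fin q, ∑ l : Fin (p - 1), F j.rev l.rev)
      = ∑ j : Fin q, ∑ l : Fin (p - 1), F j.rev l := by
        refine Finset.sum_congr rfl fun j _ => ?_
        exact Equiv.sum_comp Fin.revPerm (fun l => F j.rev l)
    _ = ∑ j : Fin q, ∑ l : Fin (p - 1), F j l :=
        Equiv.sum_comp Fin.revPerm (fun j => ∑ l : Fin (p - 1), F j l)

set_option maxHeartbeats 1000000 in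
lemma kwJ (q r₁ r₂ j : ℕ) (h1 : r₁ < q) (h2 : r₂ < q) (h3 : j < q) :
    ((q - (r₁ + 1) - r₂) ⊔ (r₂ - (q - (r₁ + 1))) ≤ j ∧
      j ≤ (2 * q - 2 - (q - (r₁ + 1)) - r₂) ⊓ (q - (r₁ + 1) + r₂))
    ↔ ((r₁ - r₂) ⊔ (r₂ - r₁) ≤ q - (j + 1) ∧
      q - (j + 1) ≤ (2 * q - 2 - r₁ - r₂) ⊓ (r₁ + r₂)) := by omega

set_option maxHeartbeats 1000000 in
lemma kwJ' (q r₁ r₂ j : ℕ) (h1 : r₁ < q) (h2 : r₂ < q) (h3 : j < q) :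
    ((r₁ - (q - (r₂ + 1))) ⊔ ((q - (r₂ + 1)) - r₁) ≤ j ∧
      j ≤ (2 * q - 2 - r₁ - (q - (r₂ + 1))) ⊓ (r₁ + (q - (r₂ + 1))))
    ↔ ((r₁ - r₂) ⊔ (r₂ - r₁) ≤ q - (j + 1) ∧
      q - (j + 1) ≤ (2 * q - 2 - r₁ - r₂) ⊓ (r₁ + r₂)) := by omega

set_option maxHeartbeats 1000000 in
lemma kwLi (p s₁ s₂ l : ℕ) (hp : 2 ≤ p) (h4 : s₁ < p - 1) (h5 : s₂ < p - 1)
    (h6 : l < p - 1) :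
    ((p - 1 - (s₁ + 1) - s₂) ⊔ (s₂ - (p - 1 - (s₁ + 1))) ≤ l ∧
      l ≤ (2 * (p - 2) - (p - 1 - (s₁ + 1)) - s₂) ⊓ (p - 1 - (s₁ + 1) + s₂))
    ↔ ((s₁ - s₂) ⊔ (s₂ - s₁) ≤ p - 1 - (l + 1) ∧
      p - 1 - (l + 1) ≤ (2 * (p - 2) - s₁ - s₂) ⊓ (s₁ + s₂)) := by omega

set_option maxHeartbeats 1000000 in
lemma kwLi' (p s₁ s₂ l : ℕ) (hp : 2 ≤ p) (h4 : s₁ < p - 1) (h5 : s₂ < p - 1)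
    (h6 : l < p - 1) :
    ((s₁ - (p - 1 - (s₂ + 1))) ⊔ ((p - 1 - (s₂ + 1)) - s₁) ≤ l ∧
      l ≤ (2 * (p - 2) - s₁ - (p - 1 - (s₂ + 1))) ⊓ (s₁ + (p - 1 - (s₂ + 1))))
    ↔ ((s₁ - s₂) ⊔ (s₂ - s₁) ≤ p - 1 - (l + 1) ∧
      p - 1 - (l + 1) ≤ (2 * (p - 2) - s₁ - s₂) ⊓ (s₁ + s₂)) := by omega

lemma kwLp (p s₁ s₂ l : ℕ) (hp : 2 ≤ p) (h4 : s₁ < p - 1) (h5 : s₂ < p - 1)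
    (h6 : l < p - 1) :
    ((p - 1 - (s₁ + 1) + s₂ + l) % 2 = 0) ↔ ((s₁ + s₂ + (p - 1 - (l + 1))) % 2 = 0) := by
  omega

lemma kwLp' (p s₁ s₂ l : ℕ) (hp : 2 ≤ p) (h4 : s₁ < p - 1) (h5 : s₂ < p - 1)
    (h6 : l < p - 1) :
    ((s₁ + (p - 1 - (s₂ + 1)) + l) % 2 = 0) ↔ ((s₁ + s₂ + (p - 1 - (l + 1))) % 2 = 0) := by
  omega

set_option maxHeartbeats 1000000 in
lemma kwE (q r₁ r₂ j : ℕ) (h1 : r₁ < q) (h3 : j < q)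
    (hA2 : j ≤ (2 * q - 2 - (q - (r₁ + 1)) - r₂) ⊓ (q - (r₁ + 1) + r₂))
    (hB2 : q - (j + 1) ≤ (2 * q - 2 - r₁ - r₂) ⊓ (r₁ + r₂)) :
    (q - (r₁ + 1) + r₂ - j) % 2 = (r₁ + r₂ - (q - (j + 1))) % 2 := by omega

set_option maxHeartbeats 1000000 in
lemma kwE' (q r₁ r₂ j : ℕ) (h2 : r₂ < q) (h3 : j < q)
    (hA2 : j ≤ (2 * q - 2 - r₁ - (q - (r₂ + 1))) ⊓ (r₁ + (q - (r₂ + 1))))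
    (hB2 : q - (j + 1) ≤ (2 * q - 2 - r₁ - r₂) ⊓ (r₁ + r₂)) :
    (r₁ + (q - (r₂ + 1)) - j) % 2 = (r₁ + r₂ - (q - (j + 1))) % 2 := by omega

set_option maxHeartbeats 1000000 in
lemma kw_left (p q : ℕ) (hp : 2 ≤ p) (hq : 0 < q) (a b : Fin q × ZMod 2 × Fin (p - 1)) :
    kwFus p q (kwInvol p q a) b = kwFus p q a b := by
  obtain ⟨r₁, α, s₁⟩ := a
  obtain ⟨r₂, β, s₂⟩ := b
  unfold kwFus kwInvol
  dsimp only
  conv_rhs => rw [← kw_reidx p q]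
  refine Finset.sum_congr rfl fun j _ => Finset.sum_congr rfl fun l _ => ?_
  simp only [Fin.val_rev]
  have h1 : (r₁ : ℕ) < q := r₁.isLt
  have h2 : (r₂ : ℕ) < q := r₂.isLt
  have h3 : (j : ℕ) < q := j.isLt
  have h4 : (s₁ : ℕ) < p - 1 := s₁.isLt
  have h5 : (s₂ : ℕ) < p - 1 := s₂.isLt
  have h6 : (l : ℕ) < p - 1 := l.isLt
  have hJ := kwJ q r₁ r₂ j h1 h2 h3
  have hLi := kwLi p s₁ s₂ l hp h4 h5 h6
  have hLp := kwLp p s₁ s₂ l hp h4 h5 h6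
  split_ifs with hA hB hB
  · refine congrArg (fun z => Finsupp.single z 1) ?_
    conv_rhs => rw [kw_quot_eq]
    refine congrArg (Quot.mk (kwRel p q)) ?_
    simp only [kwInvol, Fin.rev_rev]
    have hXY : ((q - ((r₁ : ℕ) + 1) + (r₂ : ℕ) - (j : ℕ) : ℕ) : ZMod 2)
        = (((r₁ : ℕ) + (r₂ : ℕ) - (q - ((j : ℕ) + 1)) : ℕ) : ZMod 2) := by
      rw [ZMod.natCast_eq_natCast_iff']
      exact kwE q r₁ r₂ j h1 h3 hA.2.1 hB.2.1
    refine Prod.ext rfl (Prod.ext ?_ rfl)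
    dsimp only
    rw [hXY]
    ring
  · exfalso
    obtain ⟨c1, c2, c3, c4, c5⟩ := hA
    have hj := hJ.mp ⟨c1, c2⟩
    have hl := hLi.mp ⟨c3, c4⟩
    exact hB ⟨hj.1, hj.2, hl.1, hl.2, hLp.mp c5⟩
  · exfalso
    obtain ⟨c1, c2, c3, c4, c5⟩ := hB
    have hj := hJ.mpr ⟨c1, c2⟩
    have hl := hLi.mpr ⟨c3, c4⟩
    exact hA ⟨hj.1, hj.2, hl.1, hl.2, hLp.mpr c5⟩
  · rfl

set_option maxHeartbeats 1000000 in
lemma kw_right (p q : ℕ) (hp : 2 ≤ p) (hq : 0 < q) (a b : Fin q × ZMod 2 × Fin (p - 1)) :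
    kwFus p q a (kwInvol p q b) = kwFus p q a b := by
  obtain ⟨r₁, α, s₁⟩ := a
  obtain ⟨r₂, β, s₂⟩ := b
  unfold kwFus kwInvol
  dsimp only
  conv_rhs => rw [← kw_reidx p q]
  refine Finset.sum_congr rfl fun j _ => Finset.sum_congr rfl fun l _ => ?_
  simp only [Fin.val_rev]
  have h1 : (r₁ : ℕ) < q := r₁.isLt
  have h2 : (r₂ : ℕ) < q := r₂.isLt
  have h3 : (j : ℕ) < q := j.isLt
  have h4 : (s₁ : ℕ) < p - 1 := s₁.isLt
  have h5 : (s₂ : ℕ) < p - 1 := s₂.isLt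
  have h6 : (l : ℕ) < p - 1 := l.isLt
  have hJ := kwJ' q r₁ r₂ j h1 h2 h3
  have hLi := kwLi' p s₁ s₂ l hp h4 h5 h6
  have hLp := kwLp' p s₁ s₂ l hp h4 h5 h6
  split_ifs with hA hB hB
  · refine congrArg (fun z => Finsupp.single z 1) ?_
    conv_rhs => rw [kw_quot_eq]
    refine congrArg (Quot.mk (kwRel p q)) ?_
    simp only [kwInvol, Fin.rev_rev]
    have hXY : (((r₁ : ℕ) + (q - ((r₂ : ℕ) + 1)) - (j : ℕ) : ℕ) : ZMod 2)
        = (((r₁ : ℕ) + (r₂ : ℕ) - (q - ((j : ℕ) + 1)) : ℕ) : ZMod 2) := by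
      rw [ZMod.natCast_eq_natCast_iff']
      exact kwE' q r₁ r₂ j h2 h3 hA.2.1 hB.2.1
    refine Prod.ext rfl (Prod.ext ?_ rfl)
    dsimp only
    rw [hXY]
    ring
  · exfalso
    obtain ⟨c1, c2, c3, c4, c5⟩ := hA
    have hj := hJ.mp ⟨c1, c2⟩
    have hl := hLi.mp ⟨c3, c4⟩
    exact hB ⟨hj.1, hj.2, hl.1, hl.2, hLp.mp c5⟩
  · exfalso
    obtain ⟨c1, c2, c3, c4, c5⟩ := hB
    have hj := hJ.mpr ⟨c1, c2⟩
    have hl := hLi.mpr ⟨c3, c4⟩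
    exact hA ⟨hj.1, hj.2, hl.1, hl.2, hLp.mpr c5⟩
  · rfl

/-- **The rational-level fusion product is well defined on equivalence
classes:** replacing either representative by its image under the involution
`(V_m^ε, V_n) ≈ (V_{q-1-m}^{ε+1}, V_{p-2-n})` does not change the product. -/
theorem stmt18 (p q : ℕ) (hp : 2 ≤ p) (hq : 0 < q) (hco : Nat.Coprime p q) :
    ∀ a b : Fin q × ZMod 2 × Fin (p - 1),
      kwFus p q (kwInvol p q a) b = kwFus p q a b ∧
      kwFus p q a (kwInvol p q b) = kwFus p q a b := by
  intro a b
  exact ⟨kw_left p q hp hq a b, kw_right p q hp hq a b⟩
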